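/- (Proposition 1, covariance case.) Let H be a real Hilbert space, u_1, …, u_n ∈ H with Gram matrix L (L_{ij} = ⟨u_i, u_j⟩), Ĉ the empirical covariance operator associated with u_1, …, u_n, k ∈ ℝ^{n×n} a symmetric positive semidefinite matrix, and λ > 0. Then the matrix k ⊗ L + nλ I_{n²} is invertible, and if h_1, …, h_n ∈ H satisfy Σ_{j=1}^n k_{ij} Ĉ h_j + λ h_i = u_i for all i = 1, …, n, then for every a ∈ ℝ^n and every v ∈ H, ⟨Σ_{i=1}^n a_i Ĉ h_i, v⟩ = bᵀ (aᵀ ⊗ L)(k ⊗ L + nλ I_{n²})^{-1} vec(I_n), where b ∈ ℝ^n has entries b_i = ⟨u_i, v⟩ and aᵀ ⊗ L denotes the n × n² matrix obtained as the Kronecker product of the row vector aᵀ with L. -/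

import Mathlib

open scoped RealInnerProductSpace BigOperators Kronecker
open Matrix

/-- `vecStack A` is the vectorization of the matrix `A` obtained by stacking its
columns: the entry of `vecStack A` at index `(j, i)` (column `j`, row `i`) is `A i j`. -/
def vecStack {m p : Type*} {α : Type*} (A : Matrix p m α) : m × p → α :=
  fun x => A x.2 x.1

/-- Proposition 1, covariance case: with `Ĉ` the empirical covariance
operator of `u₁, …, uₙ`, Gram matrix `L`, and `k` symmetric psd, the matrix
`k ⊗ L + nλ I_{n²}` is invertible, and any solution `h` of the ridge system
`Σⱼ kᵢⱼ Ĉ hⱼ + λ hᵢ = uᵢ` satisfies, for all `a ∈ ℝⁿ` and `v ∈ H`,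
`⟪Σᵢ aᵢ Ĉ hᵢ, v⟫ = bᵀ (aᵀ ⊗ L)(k ⊗ L + nλ I_{n²})⁻¹ vec(Iₙ)` with `bᵢ = ⟪uᵢ, v⟫`. -/
theorem proposition1_covariance_case
    {H : Type*} [NormedAddCommGroup H] [InnerProductSpace ℝ H]
    (n : ℕ) (hn : 0 < n) (u : Fin n → H)
    (L : Matrix (Fin n) (Fin n) ℝ) (hL : ∀ i j, L i j = ⟪u i, u j⟫)
    (C : H → H)
    (hC : ∀ φ : H, C φ = (1 / (n : ℝ)) • ∑ p, ⟪u p, φ⟫ • u p)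
    (k : Matrix (Fin n) (Fin n) ℝ) (hsym : k.IsSymm)
    (hpsd : ∀ c : Fin n → ℝ, 0 ≤ c ⬝ᵥ k.mulVec c)
    (lam : ℝ) (hlam : 0 < lam) :
    IsUnit (k ⊗ₖ L + ((n : ℝ) * lam) • (1 : Matrix (Fin n × Fin n) (Fin n × Fin n) ℝ)) ∧
    ∀ h : Fin n → H,
      (∀ i, (∑ j, k i j • C (h j)) + lam • h i = u i) →
      ∀ (a : Fin n → ℝ) (v : H),
        ⟪∑ i, a i • C (h i), v⟫
          = (fun i => ⟪u i, v⟫) ⬝ᵥ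
              (Matrix.of fun (p : Fin n) (jq : Fin n × Fin n) => a jq.1 * L p jq.2).mulVec
                ((k ⊗ₖ L + ((n : ℝ) * lam) • 1)⁻¹.mulVec
                  (vecStack (1 : Matrix (Fin n) (Fin n) ℝ))) := by
  classical
  have part1 : (k ⊗ₖ L + ((n : ℝ) * lam) •
      (1 : Matrix (Fin n × Fin n) (Fin n × Fin n) ℝ)).PosDef := by
    have hkpsd : k.PosSemidef := by
      refine PosSemidef.of_dotProduct_mulVec_nonneg ?_ (fun x => ?_)
      · rw [Matrix.IsHermitian, conjTranspose_eq_transpose_of_trivial]; exact hsym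
      · simpa using hpsd x
    have hLpsd : L.PosSemidef := by
      refine PosSemidef.of_dotProduct_mulVec_nonneg ?_ (fun x => ?_)
      · rw [Matrix.IsHermitian, conjTranspose_eq_transpose_of_trivial]
        ext i j
        simp [Matrix.transpose_apply, hL, real_inner_comm]
      · have hq : x ⬝ᵥ L.mulVec x = ⟪∑ i, x i • u i, ∑ j, x j • u j⟫ := by
          simp only [dotProduct, Matrix.mulVec, dotProduct, hL, sum_inner, inner_sum,
            real_inner_smul_left, real_inner_smul_right, Finset.mul_sum]
          exact Finset.sum_congr rfl fun i _ => Finset.sum_congr rfl fun j _ => by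
            rw [real_inner_comm (u j) (u i)]; ring
        simpa [hq] using real_inner_self_nonneg
    have hkron : (k ⊗ₖ L).PosSemidef := by
      exact hkpsd.kronecker hLpsd
    have hscal : (((n : ℝ) * lam) • (1 : Matrix (Fin n × Fin n) (Fin n × Fin n) ℝ)).PosDef := by
      refine PosDef.of_dotProduct_mulVec_pos ?_ (fun x hx => ?_)
      · rw [Matrix.IsHermitian, conjTranspose_eq_transpose_of_trivial]
        simp [Matrix.transpose_smul]
      · have h1 : (0:ℝ) < (n : ℝ) * lam := by positivity
        have h2 : star x ⬝ᵥ (((n : ℝ) * lam) • (1 : Matrix (Fin n × Fin n) (Fin n × Fin n) ℝ)).mulVec x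
            = ((n : ℝ) * lam) * (x ⬝ᵥ x) := by
          simp [Matrix.smul_mulVec, Matrix.one_mulVec, dotProduct_smul]
        rw [h2]
        have h3 : (0:ℝ) ≤ x ⬝ᵥ x := by simpa using dotProduct_star_self_nonneg x
        have h4 : x ⬝ᵥ x ≠ 0 := by
          intro h0
          exact hx (by simpa using dotProduct_star_self_eq_zero.mp (by simpa using h0))
        have : 0 < x ⬝ᵥ x := lt_of_le_of_ne h3 (Ne.symm h4)
        positivity
    exact Matrix.PosDef.posSemidef_add hkron hscal
  refine ⟨part1.isUnit, ?_⟩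
  intro h hridge a v
  have hMpd := part1
  classical
  set M : Matrix (Fin n × Fin n) (Fin n × Fin n) ℝ :=
    k ⊗ₖ L + ((n : ℝ) * lam) • 1 with hMdef
  have hnR : (n : ℝ) ≠ 0 := Nat.cast_ne_zero.mpr hn.ne'
  have hdet : IsUnit M.det := (Matrix.isUnit_iff_isUnit_det M).mp hMpd.isUnit
  have hinv1 : M⁻¹ * M = 1 := Matrix.nonsing_inv_mul M hdet
  have hinv2 : M * M⁻¹ = 1 := Matrix.mul_nonsing_inv M hdet
  have hLsymm : ∀ p q, L p q = L q p := fun p q => by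
    rw [hL, hL, real_inner_comm]
  -- the vector x̃ of inner products ⟪u_p, h_j⟫
  set x : Fin n × Fin n → ℝ := fun jp => ⟪u jp.2, h jp.1⟫ with hxdef
  set e : Fin n × Fin n → ℝ := vecStack (1 : Matrix (Fin n) (Fin n) ℝ) with hedef
  set l : Fin n × Fin n → ℝ := fun iq => L iq.2 iq.1 with hldef
  -- Key 1 : M *ᵥ x = n • l
  have key1 : M.mulVec x = (n : ℝ) • l := by
    funext iq
    obtain ⟨i, q⟩ := iq
    have e1 : ⟪u q, (∑ j, k i j • C (h j)) + lam • h i⟫ = ⟪u q, u i⟫ := by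
      rw [hridge i]
    have e2 : (1 / (n:ℝ)) * (∑ j, ∑ p, k i j * (L q p * ⟪u p, h j⟫)) + lam * ⟪u q, h i⟫
        = L q i := by
      rw [hL q i, ← e1]
      simp only [inner_add_right, inner_sum, real_inner_smul_right, hC, inner_smul_right,
        hL, Finset.mul_sum]
      congr 1
      exact Finset.sum_congr rfl fun j _ => Finset.sum_congr rfl fun p _ => by ring
    have hMx : M.mulVec x (i, q)
        = (∑ j, ∑ p, k i j * (L q p * ⟪u p, h j⟫)) + ((n:ℝ) * lam) * ⟪u q, h i⟫ := by
      simp only [hMdef, Matrix.add_mulVec, Matrix.smul_mulVec, Matrix.one_mulVec,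
        Pi.add_apply, Pi.smul_apply, smul_eq_mul]
      congr 1
      simp only [Matrix.mulVec, dotProduct, Fintype.sum_prod_type, kroneckerMap_apply]
      exact Finset.sum_congr rfl fun j _ => Finset.sum_congr rfl fun p _ => by ring
    rw [hMx]
    have e3 : ((n:ℝ) • l) (i, q) = (n : ℝ) * L q i := rfl
    rw [e3]
    field_simp at e2
    simp only [mul_assoc] at e2
    linear_combination e2
  -- Key 2 : (1 ⊗ₖ L) commutes with M and hence with M⁻¹
  have key2 : (1 ⊗ₖ L) * M = M * (1 ⊗ₖ L) := by
    rw [hMdef, Matrix.mul_add, Matrix.add_mul, Matrix.mul_smul, Matrix.smul_mul,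
      Matrix.mul_one, Matrix.one_mul, ← Matrix.mul_kronecker_mul, ← Matrix.mul_kronecker_mul,
      Matrix.one_mul, Matrix.mul_one]
  have key2' : M⁻¹ * (1 ⊗ₖ L) = (1 ⊗ₖ L) * M⁻¹ := by
    calc M⁻¹ * (1 ⊗ₖ L) = M⁻¹ * (1 ⊗ₖ L) * (M * M⁻¹) := by rw [hinv2, Matrix.mul_one]
    _ = M⁻¹ * ((1 ⊗ₖ L) * M) * M⁻¹ := by simp only [Matrix.mul_assoc]
    _ = M⁻¹ * (M * (1 ⊗ₖ L)) * M⁻¹ := by rw [key2]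
    _ = (M⁻¹ * M) * ((1 ⊗ₖ L) * M⁻¹) := by simp only [Matrix.mul_assoc]
    _ = (1 ⊗ₖ L) * M⁻¹ := by rw [hinv1, Matrix.one_mul]
  -- Key 3 : (1 ⊗ₖ L) *ᵥ e = l
  have key3 : (1 ⊗ₖ L).mulVec e = l := by
    funext jp
    obtain ⟨j, p⟩ := jp
    simp [Matrix.mulVec, dotProduct, Fintype.sum_prod_type, Matrix.one_apply, hedef,
      vecStack, hldef, mul_comm, Finset.sum_ite_eq]
  -- Key 4
  have key4 : (1 ⊗ₖ L).mulVec (M⁻¹.mulVec e) = (1 / (n : ℝ)) • x := by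
    rw [Matrix.mulVec_mulVec, ← key2', ← Matrix.mulVec_mulVec, key3]
    have hl : l = (1 / (n : ℝ)) • (M.mulVec x) := by
      rw [key1, smul_smul, one_div, inv_mul_cancel₀ hnR, one_smul]
    rw [hl, Matrix.mulVec_smul, Matrix.mulVec_mulVec, hinv1, Matrix.one_mulVec]
  have expand : ∀ (w : Fin n × Fin n → ℝ) (j p : Fin n),
      ((1 ⊗ₖ L).mulVec w) (j, p) = ∑ q, L p q * w (j, q) := by
    intro w j p
    simp only [Matrix.mulVec, dotProduct, Fintype.sum_prod_type, kroneckerMap_apply,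
      Matrix.one_apply, ite_mul, one_mul, zero_mul]
    rw [Finset.sum_comm]
    refine Finset.sum_congr rfl fun q _ => ?_
    simp [Finset.sum_ite_eq]
  have hpt : ∀ j p : Fin n, (∑ q, L p q * (M⁻¹.mulVec e) (j, q))
      = (1 / (n : ℝ)) * ⟪u p, h j⟫ := by
    intro j p
    rw [← expand _ j p, key4]
    simp [hxdef]
  have expandN : ∀ (w : Fin n × Fin n → ℝ) (p : Fin n),
      ((Matrix.of fun (p : Fin n) (jq : Fin n × Fin n) => a jq.1 * L p jq.2).mulVec w) p
      = ∑ j, ∑ q, (a j * L p q) * w (j, q) := by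
    intro w p
    simp only [Matrix.mulVec, dotProduct, Fintype.sum_prod_type, Matrix.of_apply]
  have hLHS : ⟪∑ i, a i • C (h i), v⟫
      = ∑ i, ∑ p, a i * ((1 / (n : ℝ)) * (⟪u p, h i⟫ * ⟪u p, v⟫)) := by
    simp only [sum_inner, real_inner_smul_left, hC, Finset.mul_sum]
  rw [hLHS]
  have hRHS : ((fun i => ⟪u i, v⟫) ⬝ᵥ
      (Matrix.of fun (p : Fin n) (jq : Fin n × Fin n) => a jq.1 * L p jq.2).mulVec
        (M⁻¹.mulVec e))
      = ∑ p, ∑ i, a i * ((1 / (n : ℝ)) * (⟪u p, h i⟫ * ⟪u p, v⟫)) := by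
    simp only [dotProduct, expandN, Finset.mul_sum]
    refine Finset.sum_congr rfl fun p _ => Finset.sum_congr rfl fun j _ => ?_
    have h1 : (∑ q, ⟪u p, v⟫ * ((a j * L p q) * (M⁻¹.mulVec e) (j, q)))
        = (⟪u p, v⟫ * a j) * ∑ q, L p q * (M⁻¹.mulVec e) (j, q) := by
      rw [Finset.mul_sum]
      exact Finset.sum_congr rfl fun q _ => by ring
    rw [h1, hpt j p]
    ring
  rw [hRHS, Finset.sum_comm]
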